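/- Let T_2 ⊆ ℝ² be the triangle with vertices (0,0), (0,1) and (1,0), and let c_2 = (1/2, 1/2). Then the expected distance from c_2 to a uniform random point in T_2 equals E[V_{T_2[2],c_2}] = (1/(6√2)) · (2 + √2 · arsinh 1), where arsinh 1 = log(1 + √2) is the inverse hyperbolic sine of 1. -/

import Mathlib

open MeasureTheory

/-- The expected distance from a fixed point `x` to a uniform random point in `K ⊆ ℝ²`. -/
noncomputable def expectedDist (K : Set (EuclideanSpace ℝ (Fin 2)))
    (x : EuclideanSpace ℝ (Fin 2)) : ℝ :=
  ((volume K).toReal)⁻¹ * ∫ y in K, ‖x - y‖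

namespace TriangleAux

open Set Real

/-- The distance-to-center function on `ℝ × ℝ`. -/
noncomputable def g : ℝ × ℝ → ℝ := fun p => Real.sqrt ((p.1 - 1/2)^2 + (p.2 - 1/2)^2)

lemma continuous_g : Continuous g := by
  apply Real.continuous_sqrt.comp
  fun_prop

lemma g_swap (p : ℝ × ℝ) : g p.swap = g p := by
  simp only [g, Prod.fst_swap, Prod.snd_swap]
  ring_nf

/-- The full triangle. -/
def T : Set (ℝ × ℝ) := {p | 0 ≤ p.1 ∧ 0 ≤ p.2 ∧ p.1 + p.2 ≤ 1}

/-- The lower (closed) half of the triangle. -/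
def L : Set (ℝ × ℝ) := {p | 0 ≤ p.2 ∧ p.2 ≤ p.1 ∧ p.1 + p.2 ≤ 1}

/-- The upper (open) half of the triangle. -/
def U : Set (ℝ × ℝ) := {p | 0 ≤ p.1 ∧ p.1 < p.2 ∧ p.1 + p.2 ≤ 1}

/-- The lower open half. -/
def L' : Set (ℝ × ℝ) := {p | 0 ≤ p.2 ∧ p.2 < p.1 ∧ p.1 + p.2 ≤ 1}

lemma measurableSet_T : MeasurableSet T :=
  (measurableSet_le measurable_const measurable_fst).inter
    ((measurableSet_le measurable_const measurable_snd).inter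
      (measurableSet_le (measurable_fst.add measurable_snd) measurable_const))

lemma measurableSet_L : MeasurableSet L :=
  (measurableSet_le measurable_const measurable_snd).inter
    ((measurableSet_le measurable_snd measurable_fst).inter
      (measurableSet_le (measurable_fst.add measurable_snd) measurable_const))

lemma measurableSet_U : MeasurableSet U :=
  (measurableSet_le measurable_const measurable_fst).inter
    ((measurableSet_lt measurable_fst measurable_snd).inter
      (measurableSet_le (measurable_fst.add measurable_snd) measurable_const))

lemma measurableSet_L' : MeasurableSet L' :=
  (measurableSet_le measurable_const measurable_snd).inter
    ((measurableSet_lt measurable_snd measurable_fst).inter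
      (measurableSet_le (measurable_fst.add measurable_snd) measurable_const))

lemma T_subset_Icc : T ⊆ Set.Icc ((0:ℝ), (0:ℝ)) (1, 1) := by
  rintro ⟨x, y⟩ ⟨h1, h2, h3⟩
  constructor <;> constructor <;> simp_all <;> linarith

lemma integrableOn_of_subset {f : ℝ × ℝ → ℝ} (hf : Continuous f) {s : Set (ℝ × ℝ)}
    (hs : s ⊆ T) : IntegrableOn f s := by
  have : IntegrableOn f (Set.Icc ((0:ℝ), (0:ℝ)) (1, 1)) :=
    hf.continuousOn.integrableOn_compact isCompact_Icc
  exact this.mono_set (hs.trans T_subset_Icc)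

lemma volume_diag : volume {p : ℝ × ℝ | p.1 = p.2} = 0 := by
  have hm : MeasurableSet {p : ℝ × ℝ | p.1 = p.2} :=
    measurableSet_eq_fun measurable_fst measurable_snd
  rw [MeasureTheory.Measure.volume_eq_prod, MeasureTheory.Measure.prod_apply hm]
  have : ∀ x : ℝ, (Prod.mk x ⁻¹' {p : ℝ × ℝ | p.1 = p.2}) = {x} := by
    intro x; ext y; simp [eq_comm]
  simp [this]

lemma L'_ae_eq_L : L' =ᵐ[volume] L := by
  rw [MeasureTheory.ae_eq_set]
  constructor
  · have : L' \ L = ∅ := by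
      ext ⟨x, y⟩
      simp only [L', L, Set.mem_diff, Set.mem_setOf_eq, Set.mem_empty_iff_false, iff_false]
      rintro ⟨⟨h1, h2, h3⟩, h4⟩
      exact h4 ⟨h1, le_of_lt h2, h3⟩
    simp [this]
  · refine measure_mono_null ?_ volume_diag
    rintro ⟨x, y⟩ ⟨⟨h1, h2, h3⟩, h4⟩
    simp only [L', Set.mem_setOf_eq, not_and] at h4
    have : ¬ y < x := fun hc => h4 h1 hc h3
    simp only [Set.mem_setOf_eq]
    exact (le_antisymm h2 (not_lt.1 this)).symm

/-- Symmetric decomposition of the integral over the triangle. -/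
lemma integral_T_eq (f : ℝ × ℝ → ℝ) (hf : Continuous f)
    (hsymm : ∀ p : ℝ × ℝ, f p.swap = f p) :
    ∫ p in T, f p = 2 * ∫ p in L, f p := by
  have hLT : L ⊆ T := by rintro ⟨x,y⟩ ⟨h1,h2,h3⟩; exact ⟨le_trans h1 h2, h1, h3⟩
  have hUT : U ⊆ T := by rintro ⟨x,y⟩ ⟨h1,h2,h3⟩; exact ⟨h1, le_of_lt (lt_of_le_of_lt h1 h2), h3⟩
  have hL'T : L' ⊆ T := by rintro ⟨x,y⟩ ⟨h1,h2,h3⟩; exact ⟨le_trans h1 (le_of_lt h2), h1, h3⟩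
  have hTLU : T = L ∪ U := by
    ext ⟨x,y⟩
    constructor
    · rintro ⟨h1,h2,h3⟩
      rcases le_or_gt y x with h|h
      · exact Or.inl ⟨h2, h, h3⟩
      · exact Or.inr ⟨h1, h, h3⟩
    · rintro (h|h)
      exacts [hLT h, hUT h]
  have hdisj : Disjoint L U := by
    rw [Set.disjoint_left]
    rintro ⟨x,y⟩ ⟨h1,h2,h3⟩ ⟨h4,h5,h6⟩
    exact absurd h2 (not_le.2 h5)
  have hU : ∫ p in U, f p = ∫ p in L, f p := by
    have hpre : U = Prod.swap ⁻¹' L' := by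
      ext ⟨x,y⟩
      simp only [U, L', Set.mem_preimage, Prod.swap_prod_mk, Set.mem_setOf_eq]
      constructor <;> rintro ⟨h1,h2,h3⟩ <;> exact ⟨h1,h2, by linarith⟩
    have hswap : MeasurePreserving (Prod.swap : ℝ × ℝ → ℝ × ℝ) volume volume := by
      rw [MeasureTheory.Measure.volume_eq_prod]
      exact MeasureTheory.Measure.measurePreserving_swap
    have hemb : MeasurableEmbedding (Prod.swap : ℝ × ℝ → ℝ × ℝ) :=
      (MeasurableEquiv.prodComm : ℝ × ℝ ≃ᵐ ℝ × ℝ).measurableEmbedding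
    calc ∫ p in U, f p = ∫ p in Prod.swap ⁻¹' L', f (Prod.swap p) := by
            rw [hpre]
            exact MeasureTheory.setIntegral_congr_fun
              (measurableSet_L'.preimage measurable_swap) (fun p _ => (hsymm p).symm)
      _ = ∫ p in L', f p := hswap.setIntegral_preimage_emb hemb _ _
      _ = ∫ p in L, f p := MeasureTheory.setIntegral_congr_set L'_ae_eq_L
  rw [hTLU, MeasureTheory.setIntegral_union hdisj measurableSet_U
    (integrableOn_of_subset hf hLT) (integrableOn_of_subset hf hUT), hU]
  ring

/-- Fubini over the lower triangle. -/
lemma integral_L_eq (f : ℝ × ℝ → ℝ) (hf : Continuous f) :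
    ∫ p in L, f p = ∫ y in Set.Icc (0:ℝ) (1/2), ∫ x in y..(1-y), f (x, y) := by
  have hLT : L ⊆ T := by rintro ⟨x,y⟩ ⟨h1,h2,h3⟩; exact ⟨le_trans h1 h2, h1, h3⟩
  have hint : Integrable (L.indicator f) (volume : Measure (ℝ × ℝ)) := by
    rw [MeasureTheory.integrable_indicator_iff measurableSet_L]
    exact integrableOn_of_subset hf hLT
  rw [← MeasureTheory.integral_indicator measurableSet_L]
  rw [MeasureTheory.Measure.volume_eq_prod] at hint ⊢
  rw [MeasureTheory.integral_prod_symm _ hint]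
  have key : ∀ y : ℝ, (∫ x, L.indicator f (x, y)) =
      (Set.Icc (0:ℝ) (1/2)).indicator (fun y => ∫ x in y..(1-y), f (x, y)) y := by
    intro y
    by_cases hy : y ∈ Set.Icc (0:ℝ) (1/2)
    · rw [Set.indicator_of_mem hy]
      obtain ⟨hy0, hy2⟩ := hy
      have h1 : (fun x => L.indicator f (x, y))
          = (Set.Icc y (1-y)).indicator (fun x => f (x, y)) := by
        funext x
        by_cases hx : x ∈ Set.Icc y (1-y)
        · rw [Set.indicator_of_mem hx, Set.indicator_of_mem]
          exact ⟨hy0, hx.1, by obtain ⟨_, h⟩ := hx; linarith⟩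
        · rw [Set.indicator_of_notMem hx, Set.indicator_of_notMem]
          rintro ⟨h1, h2, h3⟩
          exact hx ⟨h2, by linarith⟩
      rw [h1, MeasureTheory.integral_indicator measurableSet_Icc,
        MeasureTheory.integral_Icc_eq_integral_Ioc,
        ← intervalIntegral.integral_of_le (by linarith : y ≤ 1 - y)]
    · rw [Set.indicator_of_notMem hy]
      have hz : (fun x => L.indicator f (x, y)) = fun _ => (0:ℝ) := by
        funext x
        apply Set.indicator_of_notMem
        rintro ⟨h1, h2, h3⟩
        simp only [Set.mem_Icc, not_and, not_le] at hy
        exact absurd (by linarith : y ≤ 1/2) (not_le.2 (hy h1))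
      rw [hz, integral_zero]
  simp_rw [key]
  rw [MeasureTheory.integral_indicator measurableSet_Icc]

lemma deriv_aux (t b S : ℝ) (hS : 0 < S) (hSx : 0 < t + S) (hS2 : S^2 = t^2 + b^2) :
    S = (1 * S + t * (1/(2*S) * (2*t)) + b^2 * ((t+S)⁻¹ * (1 + 1/(2*S)*(2*t))))/2 := by
  have h1 : (1:ℝ)/(2*S) * (2*t) = t / S := by field_simp
  rw [h1]
  have h2 : (1:ℝ) + t/S = (S+t)/S := by field_simp
  rw [h2]
  have h3 : (t+S)⁻¹ * ((S+t)/S) = 1/S := by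
    rw [show S + t = t + S by ring]
    field_simp
  rw [h3]
  field_simp
  linear_combination hS2

lemma arsinh_one : Real.arsinh 1 = Real.log (1 + Real.sqrt 2) := by
  rw [Real.arsinh]
  norm_num [add_comm]

lemma inner_g {y : ℝ} (hy : y ∈ Set.Icc (0:ℝ) (1/2)) :
    ∫ x in y..(1-y), g (x, y) = (1/2 - y)^2 * (Real.sqrt 2 + Real.arsinh 1) := by
  obtain ⟨hy0, hy2⟩ := hy
  set b : ℝ := 1/2 - y with hb
  have hb0 : 0 ≤ b := by rw [hb]; linarith
  have hgx : ∀ x : ℝ, g (x, y) = Real.sqrt ((x - 1/2)^2 + b^2) := by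
    intro x
    simp only [g]
    congr 1
    rw [hb]; ring
  simp_rw [hgx]
  rcases eq_or_lt_of_le hb0 with hbz | hbpos
  · have hyy : (1:ℝ) - y = y := by rw [hb] at hbz; linarith
    rw [hyy, intervalIntegral.integral_same, ← hbz]
    ring
  · set G : ℝ → ℝ := fun x => ((x - 1/2) * Real.sqrt ((x - 1/2)^2 + b^2)
        + b^2 * Real.log ((x - 1/2) + Real.sqrt ((x - 1/2)^2 + b^2))) / 2 with hG
    have hsq : ∀ x : ℝ, 0 < (x - 1/2)^2 + b^2 := fun x => by positivity
    have hderiv : ∀ x ∈ Set.uIcc y (1-y),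
        HasDerivAt G (Real.sqrt ((x - 1/2)^2 + b^2)) x := by
      intro x _
      have hS : 0 < Real.sqrt ((x - 1/2)^2 + b^2) := Real.sqrt_pos.2 (hsq x)
      have hS2 : (Real.sqrt ((x - 1/2)^2 + b^2))^2 = (x - 1/2)^2 + b^2 :=
        Real.sq_sqrt (le_of_lt (hsq x))
      have hSx : 0 < (x - 1/2) + Real.sqrt ((x - 1/2)^2 + b^2) := by
        have h1 : |x - 1/2| < Real.sqrt ((x - 1/2)^2 + b^2) := by
          rw [← Real.sqrt_sq_eq_abs]
          exact Real.sqrt_lt_sqrt (sq_nonneg _) (lt_add_of_pos_right _ (pow_pos hbpos 2))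
        have h2 := neg_abs_le (x - 1/2)
        linarith
      have hs : HasDerivAt (fun x : ℝ => (x - 1/2)^2 + b^2) (2*(x - 1/2)) x := by
        have := (((hasDerivAt_id x).sub_const (1/2)).pow 2).add_const (b^2)
        simpa using this
      have hr : HasDerivAt (fun x : ℝ => Real.sqrt ((x - 1/2)^2 + b^2))
          (1 / (2 * Real.sqrt ((x - 1/2)^2 + b^2)) * (2*(x - 1/2))) x :=
        (Real.hasDerivAt_sqrt (ne_of_gt (hsq x))).comp x hs
      have ha : HasDerivAt (fun x : ℝ => (x - 1/2) + Real.sqrt ((x - 1/2)^2 + b^2))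
          (1 + 1 / (2 * Real.sqrt ((x - 1/2)^2 + b^2)) * (2*(x - 1/2))) x :=
        ((hasDerivAt_id x).sub_const (1/2)).add hr
      have hlog : HasDerivAt (fun x : ℝ => Real.log ((x - 1/2) + Real.sqrt ((x - 1/2)^2 + b^2)))
          (((x - 1/2) + Real.sqrt ((x - 1/2)^2 + b^2))⁻¹ *
            (1 + 1 / (2 * Real.sqrt ((x - 1/2)^2 + b^2)) * (2*(x - 1/2)))) x :=
        (Real.hasDerivAt_log (ne_of_gt hSx)).comp (h₂ := Real.log) x ha
      have hmul : HasDerivAt (fun x : ℝ => (x - 1/2) * Real.sqrt ((x - 1/2)^2 + b^2))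
          (1 * Real.sqrt ((x - 1/2)^2 + b^2)
            + (x - 1/2) * (1 / (2 * Real.sqrt ((x - 1/2)^2 + b^2)) * (2*(x - 1/2)))) x :=
        ((hasDerivAt_id x).sub_const (1/2)).mul hr
      have := (hmul.add (hlog.const_mul (b^2))).div_const 2
      refine this.congr_deriv ?_
      exact (deriv_aux (x - 1/2) b _ hS hSx hS2).symm
    rw [intervalIntegral.integral_eq_sub_of_hasDerivAt hderiv
      ((Real.continuous_sqrt.comp (by fun_prop)).intervalIntegrable y (1-y))]
    have e1 : (1 - y - 1/2 : ℝ) = b := by rw [hb]; ring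
    have e2 : (y - 1/2 : ℝ) = -b := by rw [hb]; ring
    have h2b : Real.sqrt (b^2 + b^2) = Real.sqrt 2 * b := by
      rw [show b^2 + b^2 = 2 * b^2 by ring, Real.sqrt_mul (by norm_num : (0:ℝ) ≤ 2),
        Real.sqrt_sq hb0]
    have hnb : ((-b:ℝ))^2 = b^2 := by ring
    have h12 : (1:ℝ) < Real.sqrt 2 := by
      rw [show (1:ℝ) = Real.sqrt 1 by simp]
      exact Real.sqrt_lt_sqrt (by norm_num) (by norm_num)
    have hprod : (Real.sqrt 2 - 1) * (1 + Real.sqrt 2) = 1 := by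
      nlinarith [Real.sq_sqrt (show (0:ℝ) ≤ 2 by norm_num)]
    have hlogm : Real.log (Real.sqrt 2 - 1) = - Real.log (1 + Real.sqrt 2) := by
      rw [show Real.sqrt 2 - 1 = (1 + Real.sqrt 2)⁻¹ from
        eq_inv_of_mul_eq_one_left hprod, Real.log_inv]
    simp only [hG, e1, e2, hnb, h2b]
    rw [show b + Real.sqrt 2 * b = b * (1 + Real.sqrt 2) by ring,
      show -b + Real.sqrt 2 * b = b * (Real.sqrt 2 - 1) by ring,
      Real.log_mul (ne_of_gt hbpos) (by positivity),
      Real.log_mul (ne_of_gt hbpos) (by nlinarith), hlogm, arsinh_one]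
    ring

lemma outer_g : ∫ y in Set.Icc (0:ℝ) (1/2), (1/2 - y)^2 * (Real.sqrt 2 + Real.arsinh 1)
    = (Real.sqrt 2 + Real.arsinh 1) / 24 := by
  set C := Real.sqrt 2 + Real.arsinh 1 with hC
  rw [MeasureTheory.integral_Icc_eq_integral_Ioc,
    ← intervalIntegral.integral_of_le (by norm_num : (0:ℝ) ≤ 1/2)]
  have hd : ∀ y ∈ Set.uIcc (0:ℝ) (1/2),
      HasDerivAt (fun y : ℝ => -((1/2 - y)^3 / 3) * C) ((1/2 - y)^2 * C) y := by
    intro y _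
    have h1 : HasDerivAt (fun y : ℝ => 1/2 - y) (-1) y := (hasDerivAt_id y).const_sub (1/2)
    have h2 := ((h1.pow 3).div_const 3).neg.mul_const C
    refine h2.congr_deriv ?_
    ring
  rw [intervalIntegral.integral_eq_sub_of_hasDerivAt hd
    ((by fun_prop : Continuous fun y : ℝ => (1/2 - y)^2 * C).intervalIntegrable _ _)]
  norm_num
  ring

lemma volume_T : (volume T).toReal = 1/2 := by
  have h1 : (volume T).toReal = ∫ _p in T, (1:ℝ) := by
    rw [MeasureTheory.setIntegral_const]; simp [Measure.real]
  rw [h1, integral_T_eq _ continuous_const (fun p => rfl), integral_L_eq _ continuous_const]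
  have h2 : Set.EqOn (fun y : ℝ => ∫ _x in y..(1-y), (1:ℝ)) (fun y : ℝ => 1 - 2*y)
      (Set.Icc (0:ℝ) (1/2)) := by
    intro y _
    simp only [intervalIntegral.integral_const, smul_eq_mul, mul_one]
    ring
  rw [MeasureTheory.setIntegral_congr_fun measurableSet_Icc h2]
  rw [MeasureTheory.integral_Icc_eq_integral_Ioc,
    ← intervalIntegral.integral_of_le (by norm_num : (0:ℝ) ≤ 1/2)]
  have hd : ∀ y ∈ Set.uIcc (0:ℝ) (1/2),
      HasDerivAt (fun y : ℝ => y - y^2) (1 - 2*y) y := by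
    intro y _
    have h := (hasDerivAt_id y).sub ((hasDerivAt_id y).pow 2)
    refine h.congr_deriv ?_
    simp [id]
  rw [intervalIntegral.integral_eq_sub_of_hasDerivAt hd
    ((by fun_prop : Continuous fun y : ℝ => 1 - 2*y).intervalIntegrable _ _)]
  norm_num

lemma integral_T_g : ∫ p in T, g p = (Real.sqrt 2 + Real.arsinh 1) / 12 := by
  rw [integral_T_eq g continuous_g g_swap, integral_L_eq g continuous_g]
  rw [MeasureTheory.setIntegral_congr_fun measurableSet_Icc (fun y hy => inner_g hy), outer_g]
  ring

end TriangleAux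

/-- For the triangle with vertices `(0,0)`, `(0,1)`, `(1,0)` and `c₂ = (1/2, 1/2)`, the
expected distance from `c₂` to a uniform random point equals
`(1/(6√2)) (2 + √2 arsinh 1)`. -/
theorem expectedDist_midpoint_rightTriangle :
    expectedDist (convexHull ℝ {(!₂[0, 0] : EuclideanSpace ℝ (Fin 2)), !₂[0, 1], !₂[1, 0]})
        (!₂[1/2, 1/2] : EuclideanSpace ℝ (Fin 2)) =
      1 / (6 * Real.sqrt 2) * (2 + Real.sqrt 2 * Real.arsinh 1) := by
  classical
  have hhull : convexHull ℝ {(!₂[0, 0] : EuclideanSpace ℝ (Fin 2)), !₂[0, 1], !₂[1, 0]}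
      = {y : EuclideanSpace ℝ (Fin 2) | 0 ≤ y 0 ∧ 0 ≤ y 1 ∧ y 0 + y 1 ≤ 1} := by
    apply Set.Subset.antisymm
    · apply convexHull_min
      · intro p hp
        rcases hp with h | h | h <;> subst h <;>
          refine ⟨?_, ?_, ?_⟩ <;>
          · simp only [Set.mem_setOf_eq, Matrix.cons_val_zero, Matrix.cons_val_one,
              Matrix.head_cons]
            norm_num
      · intro x hx y hy a c ha hc hac
        obtain ⟨hx0, hx1, hxs⟩ := hx
        obtain ⟨hy0, hy1, hys⟩ := hy
        have e0 : (a • x + c • y) 0 = a * x 0 + c * y 0 := rfl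
        have e1 : (a • x + c • y) 1 = a * x 1 + c * y 1 := rfl
        refine ⟨?_, ?_, ?_⟩
        · rw [e0]; exact add_nonneg (mul_nonneg ha hx0) (mul_nonneg hc hy0)
        · rw [e1]; exact add_nonneg (mul_nonneg ha hx1) (mul_nonneg hc hy1)
        · rw [e0, e1]; nlinarith
    · intro p hp
      obtain ⟨hp0, hp1, hps⟩ := hp
      by_cases ht : p 0 + p 1 = 0
      · have h0 : p 0 = 0 := le_antisymm (by linarith) hp0
        have h1 : p 1 = 0 := le_antisymm (by linarith) hp1
        have hpe : p = !₂[0, 0] := by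
          ext i
          fin_cases i <;> simp [h0, h1]
        rw [hpe]
        exact subset_convexHull ℝ _ (by simp)
      · have htpos : 0 < p 0 + p 1 := lt_of_le_of_ne (add_nonneg hp0 hp1) (Ne.symm ht)
        set t : ℝ := p 0 + p 1 with htdef
        have hq : ((t⁻¹ * p 1) • (!₂[0, 1] : EuclideanSpace ℝ (Fin 2))
            + (t⁻¹ * p 0) • !₂[1, 0]) ∈
            convexHull ℝ {(!₂[0, 0] : EuclideanSpace ℝ (Fin 2)), !₂[0, 1], !₂[1, 0]} := by
          refine (convex_convexHull ℝ _) (subset_convexHull ℝ _ (by simp))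
            (subset_convexHull ℝ _ (by simp)) ?_ ?_ ?_
          · exact mul_nonneg (inv_nonneg.2 (le_of_lt htpos)) hp1
          · exact mul_nonneg (inv_nonneg.2 (le_of_lt htpos)) hp0
          · field_simp
            ring
        have hpe : p = (1 - t) • (!₂[0, 0] : EuclideanSpace ℝ (Fin 2))
            + t • ((t⁻¹ * p 1) • (!₂[0, 1] : EuclideanSpace ℝ (Fin 2))
              + (t⁻¹ * p 0) • !₂[1, 0]) := by
          ext i
          have htne : t ≠ 0 := ne_of_gt htpos
          fin_cases i <;>
            · show p _ = (1 - t) * _ + t * ((t⁻¹ * p 1) * _ + (t⁻¹ * p 0) * _)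
              simp only [Matrix.cons_val_zero, Matrix.cons_val_one, Matrix.head_cons,
                Equiv.toFun_as_coe, WithLp.equiv_apply, WithLp.ofLp_toLp, Fin.zero_eta, Fin.mk_one]
              field_simp
              ring
        rw [hpe]
        exact (convex_convexHull ℝ _) (subset_convexHull ℝ _ (by simp)) hq
          (by nlinarith) (le_of_lt htpos) (by ring)
  set c : EuclideanSpace ℝ (Fin 2) := !₂[1/2, 1/2] with hc
  have key : expectedDist {y : EuclideanSpace ℝ (Fin 2) | 0 ≤ y 0 ∧ 0 ≤ y 1 ∧ y 0 + y 1 ≤ 1} c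
      = 1 / (6 * Real.sqrt 2) * (2 + Real.sqrt 2 * Real.arsinh 1) := by
    set φ : EuclideanSpace ℝ (Fin 2) → ℝ × ℝ := fun y => ((y 0 : ℝ), (y 1 : ℝ)) with hφ
    have hmp : MeasurePreserving φ volume volume :=
      (MeasureTheory.volume_preserving_finTwoArrow ℝ).comp
        (EuclideanSpace.volume_preserving_symm_measurableEquiv_toLp (Fin 2))
    have hemb : MeasurableEmbedding φ :=
      ((MeasurableEquiv.toLp 2 (Fin 2 → ℝ)).symm.trans
        (MeasurableEquiv.finTwoArrow)).measurableEmbedding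
    have hSpre : {y : EuclideanSpace ℝ (Fin 2) | 0 ≤ y 0 ∧ 0 ≤ y 1 ∧ y 0 + y 1 ≤ 1}
        = φ ⁻¹' TriangleAux.T := rfl
    have hvol : volume {y : EuclideanSpace ℝ (Fin 2) | 0 ≤ y 0 ∧ 0 ≤ y 1 ∧ y 0 + y 1 ≤ 1}
        = volume TriangleAux.T := by
      rw [hSpre]
      exact hmp.measure_preimage TriangleAux.measurableSet_T.nullMeasurableSet
    have hint : ∫ y in {y : EuclideanSpace ℝ (Fin 2) | 0 ≤ y 0 ∧ 0 ≤ y 1 ∧ y 0 + y 1 ≤ 1},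
        ‖c - y‖
        = ∫ p in TriangleAux.T, TriangleAux.g p := by
      rw [hSpre, ← hmp.setIntegral_preimage_emb hemb TriangleAux.g TriangleAux.T]
      refine MeasureTheory.setIntegral_congr_fun
        (TriangleAux.measurableSet_T.preimage hmp.measurable) (fun y _ => ?_)
      rw [EuclideanSpace.norm_eq]
      rw [Fin.sum_univ_two]
      have e0 : (c - y) 0 = 1/2 - y 0 := rfl
      have e1 : (c - y) 1 = 1/2 - y 1 := rfl
      rw [e0, e1]
      simp only [Real.norm_eq_abs, sq_abs, TriangleAux.g]
      congr 1
      ring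
    rw [expectedDist, hvol, hint, TriangleAux.volume_T, TriangleAux.integral_T_g]
    have hs2 : Real.sqrt 2 * Real.sqrt 2 = 2 := Real.mul_self_sqrt (by norm_num)
    have hs2ne : Real.sqrt 2 ≠ 0 := by positivity
    field_simp
    linear_combination 12 * hs2
  exact (congrArg (fun s => expectedDist s c) hhull).trans key
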